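/- Let M, L be positive integers, let S_1, …, S_L ⊆ Fin M be a hierarchical (laminar) family with integer capacities C_1, …, C_L ≥ 1, and let p̃ : Fin M → ℝ. Then the greedy output x* (as defined in the context) is feasible, i.e. ∑_{j ∈ S_l} x*_j ≤ C_l for every l ∈ {1,…,L}, and it is optimal: for every x : Fin M → {0,1} with ∑_{j ∈ S_l} x_j ≤ C_l for every l, one has ∑_{j=1}^{M} p̃_j x_j ≤ ∑_{j=1}^{M} p̃_j x*_j. (Proposition 1: the greedy algorithm optimally solves the per-group integer programming subproblem with hierarchical local constraints.) -/

import Mathlib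

attribute [local instance] Classical.propDecidable

/-- One step of the greedy algorithm: from the current candidate set `A`, keep all items
outside `S`, and inside `S` keep only the (at most) `C` smallest items of `A ∩ S` with
respect to the tie-broken order `r` (an item is kept iff fewer than `C` items of `A ∩ S`
precede it under `r`). -/
noncomputable def greedyStep {M : ℕ} (r : Fin M → Fin M → Prop) (C : ℕ)
    (S A : Finset (Fin M)) : Finset (Fin M) :=
  (A \ S) ∪ (A ∩ S).filter (fun j => ((A ∩ S).filter (fun j' => r j' j)).card < C)

/-- The greedy iterates: `A_0 = {j : 0 < p j}` and `A_{l+1} = greedyStep r (C l) (S l) A_l`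
for `l < L` (indices beyond `L` leave the set unchanged). -/
noncomputable def greedySets {M L : ℕ} (r : Fin M → Fin M → Prop)
    (S : Fin L → Finset (Fin M)) (C : Fin L → ℕ) (p : Fin M → ℝ) : ℕ → Finset (Fin M)
  | 0 => Finset.univ.filter (fun j => 0 < p j)
  | n + 1 =>
    if h : n < L then
      greedyStep r (C ⟨n, h⟩) (S ⟨n, h⟩) (greedySets r S C p n)
    else greedySets r S C p n

/-- The greedy output `x*`: the 0/1 indicator (as a real-valued function) of the final
greedy set `A_L`. -/
noncomputable def greedyOutput {M L : ℕ} (r : Fin M → Fin M → Prop)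
    (S : Fin L → Finset (Fin M)) (C : Fin L → ℕ) (p : Fin M → ℝ) : Fin M → ℝ :=
  fun j => if j ∈ greedySets r S C p L then 1 else 0

set_option linter.unusedSectionVars false
set_option linter.unusedVariables false

section Rank

variable {α : Type*} (r : α → α → Prop)

/-- rank of `j` within `V`: number of elements of `V` strictly preceding `j`. -/
noncomputable def rk (V : Finset α) (j : α) : ℕ := (V.filter (fun j' => r j' j)).card

/-- the top set: elements of `V` of rank `< C`. -/
noncomputable def TT (C : ℕ) (V : Finset α) : Finset α := V.filter (fun j => rk r V j < C)

variable [IsStrictTotalOrder α r]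

lemma rk_lt_rk (V : Finset α) {j j' : α} (hj' : j' ∈ V) (hrel : r j' j) :
    rk r V j' < rk r V j := by
  apply Finset.card_lt_card
  constructor
  · intro a ha
    simp only [Finset.mem_filter] at ha ⊢
    exact ⟨ha.1, _root_.trans ha.2 hrel⟩
  · intro hsub
    have : j' ∈ V.filter (fun a => r a j) := Finset.mem_filter.2 ⟨hj', hrel⟩
    have := hsub this
    simp only [Finset.mem_filter] at this
    exact irrefl j' this.2

lemma rk_injOn (V : Finset α) : Set.InjOn (rk r V) V := by
  intro a ha b hb hab
  rcases trichotomous_of r a b with h | h | h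
  · exact absurd hab (Nat.ne_of_lt (rk_lt_rk r V ha h))
  · exact h
  · exact absurd hab.symm (Nat.ne_of_lt (rk_lt_rk r V hb h))

lemma rk_lt_card (V : Finset α) {j : α} (hj : j ∈ V) : rk r V j < V.card := by
  apply Finset.card_lt_card
  constructor
  · exact Finset.filter_subset _ _
  · intro hsub
    have := hsub hj
    simp only [Finset.mem_filter] at this
    exact irrefl j this.2

lemma rk_mono_set {W V : Finset α} (h : W ⊆ V) (j : α) : rk r W j ≤ rk r V j :=
  Finset.card_le_card (Finset.filter_subset_filter _ h)

lemma TT_subset (C : ℕ) (V : Finset α) : TT r C V ⊆ V := Finset.filter_subset _ _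

lemma TT_downward {C : ℕ} {V : Finset α} {t j' : α} (ht : t ∈ TT r C V)
    (hj' : j' ∈ V) (hrel : r j' t) : j' ∈ TT r C V := by
  simp only [TT, Finset.mem_filter] at ht ⊢
  exact ⟨hj', lt_trans (rk_lt_rk r V hj' hrel) ht.2⟩


lemma card_TT_le (C : ℕ) (V : Finset α) : (TT r C V).card ≤ C := by
  have : (TT r C V).card ≤ (Finset.range C).card := by
    apply Finset.card_le_card_of_injOn (rk r V)
    · intro a ha
      simp only [TT, Finset.mem_coe, Finset.mem_filter] at ha
      exact Finset.mem_range.2 ha.2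
    · exact (rk_injOn r V).mono (fun a ha => TT_subset r C V ha)
  simpa using this

lemma min_le_card_TT (C : ℕ) (V : Finset α) : min C V.card ≤ (TT r C V).card := by
  by_contra hcon
  push_neg at hcon
  have hTVlt : (TT r C V).card < V.card := lt_of_lt_of_le hcon (min_le_right _ _)
  have hTC : (TT r C V).card < C := lt_of_lt_of_le hcon (min_le_left _ _)
  have hne : (V \ TT r C V).Nonempty := by
    rw [Finset.sdiff_nonempty]
    intro hsub
    exact absurd (Finset.card_le_card hsub) (not_le.2 hTVlt)
  obtain ⟨j, hj, hjmin⟩ := Finset.exists_min_image (V \ TT r C V) (rk r V) hne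
  have hjV : j ∈ V := (Finset.mem_sdiff.1 hj).1
  have hjT : j ∉ TT r C V := (Finset.mem_sdiff.1 hj).2
  have hrkj : C ≤ rk r V j := by
    by_contra h
    exact hjT (Finset.mem_filter.2 ⟨hjV, not_le.1 h⟩)
  have hsub : V.filter (fun j' => r j' j) ⊆ TT r C V := by
    intro a ha
    simp only [Finset.mem_filter] at ha
    by_contra haT
    have := hjmin a (Finset.mem_sdiff.2 ⟨ha.1, haT⟩)
    exact absurd this (not_le.2 (rk_lt_rk r V ha.1 ha.2))
  have h5 := Finset.card_le_card hsub
  have h6 : rk r V j = (V.filter (fun j' => r j' j)).card := rfl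
  omega

lemma rk_TT_eq {C : ℕ} {V : Finset α} {t : α} (ht : t ∈ TT r C V) :
    rk r (TT r C V) t = rk r V t := by
  unfold rk
  congr 1
  apply Finset.Subset.antisymm
  · exact Finset.filter_subset_filter _ (TT_subset r C V)
  · intro a ha
    simp only [Finset.mem_filter] at ha ⊢
    exact ⟨TT_downward r ht ha.1 ha.2, ha.2⟩

lemma exists_selection (C : ℕ) {V W : Finset α} (hWV : W ⊆ V)
    (hcard : W.card ≤ (TT r C V).card) :
    ∃ h : α → α, Set.InjOn h W ∧ (∀ w ∈ W, h w ∈ TT r C V) ∧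
      (∀ w ∈ W, h w = w ∨ r (h w) w) := by
  set T := TT r C V with hT
  -- the rank map on T is surjective onto range T.card
  have himg : T.image (rk r T) = Finset.range T.card := by
    apply Finset.eq_of_subset_of_card_le
    · intro k hk
      obtain ⟨t, ht, rfl⟩ := Finset.mem_image.1 hk
      exact Finset.mem_range.2 (rk_lt_card r T ht)
    · rw [Finset.card_range, Finset.card_image_of_injOn (rk_injOn r T)]
  have hsurj : ∀ k, k < T.card → ∃ t ∈ T, rk r T t = k := by
    intro k hk
    have : k ∈ T.image (rk r T) := by rw [himg]; exact Finset.mem_range.2 hk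
    simpa using Finset.mem_image.1 this
  classical
  set h : α → α := fun w => if hw : rk r W w < T.card then (hsurj _ hw).choose else w with hh
  have hmem : ∀ w ∈ W, h w ∈ T ∧ rk r T (h w) = rk r W w := by
    intro w hw
    have hlt : rk r W w < T.card := lt_of_lt_of_le (rk_lt_card r W hw) hcard
    simp only [hh, dif_pos hlt]
    exact ⟨(hsurj _ hlt).choose_spec.1, (hsurj _ hlt).choose_spec.2⟩
  refine ⟨h, ?_, fun w hw => (hmem w hw).1, ?_⟩
  · intro a ha b hb hab
    have h1 := (hmem a ha).2
    have h2 := (hmem b hb).2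
    rw [hab, h2] at h1
    exact (rk_injOn r W hb ha h1).symm
  · intro w hw
    rcases trichotomous_of r (h w) w with hc | hc | hc
    · exact Or.inr hc
    · exact Or.inl hc
    -- bad case : r w (h w)
    · exfalso
      have hwT : w ∈ T := TT_downward r (hmem w hw).1 (hWV hw) hc
      have h1 : rk r T w < rk r T (h w) := rk_lt_rk r T hwT hc
      have h2 : rk r T (h w) = rk r W w := (hmem w hw).2
      have h3 : rk r W w ≤ rk r V w := rk_mono_set r hWV w
      have h4 : rk r T w = rk r V w := rk_TT_eq r hwT
      omega

end Rank



section Greedy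

variable {M L : ℕ} (r : Fin M → Fin M → Prop) (S : Fin L → Finset (Fin M))
  (C : Fin L → ℕ) (p : Fin M → ℝ) [IsStrictTotalOrder (Fin M) r]

lemma greedyStep_eq (c : ℕ) (s A : Finset (Fin M)) :
    greedyStep r c s A = (A \ s) ∪ TT r c (A ∩ s) := rfl

lemma greedyStep_subset (c : ℕ) (s A : Finset (Fin M)) : greedyStep r c s A ⊆ A := by
  rw [greedyStep_eq]
  apply Finset.union_subset (Finset.sdiff_subset)
  exact (TT_subset r c (A ∩ s)).trans Finset.inter_subset_left

lemma greedyStep_inter (c : ℕ) (s A : Finset (Fin M)) :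
    greedyStep r c s A ∩ s = TT r c (A ∩ s) := by
  rw [greedyStep_eq, Finset.union_inter_distrib_right]
  rw [Finset.sdiff_inter_self, Finset.empty_union]
  apply Finset.inter_eq_left.2
  exact (TT_subset r c (A ∩ s)).trans Finset.inter_subset_right

lemma greedySets_succ_subset (n : ℕ) :
    greedySets r S C p (n + 1) ⊆ greedySets r S C p n := by
  rw [greedySets]
  split
  · exact greedyStep_subset _ _ _ _
  · exact subset_rfl

lemma greedySets_subset {m n : ℕ} (h : m ≤ n) :
    greedySets r S C p n ⊆ greedySets r S C p m := by
  induction n with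
  | zero => simp_all
  | succ k ih =>
    rcases Nat.lt_or_ge m (k+1) with h' | h'
    · exact (greedySets_succ_subset r S C p k).trans (ih (Nat.lt_succ_iff.1 h'))
    · have : m = k + 1 := le_antisymm h h'
      subst this; exact subset_rfl

lemma greedySets_pos {n : ℕ} {j : Fin M} (hj : j ∈ greedySets r S C p n) : 0 < p j := by
  have := greedySets_subset r S C p (Nat.zero_le n) hj
  rw [greedySets] at this
  simpa using this


lemma greedy_invariant
    (hlaminar : ∀ l l' : Fin L, (S l ∩ S l').Nonempty → S l ⊆ S l' ∨ S l' ⊆ S l)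
    (horder : ∀ a b : Fin L, S a ⊂ S b → a < b)
    (hrefine : ∀ j j' : Fin M, p j > p j' → r j j') :
    ∀ n : ℕ, ∀ B : Finset (Fin M),
      (∀ k : Fin L, (k : ℕ) < n → (B ∩ S k).card ≤ C k) →
      ∃ B' : Finset (Fin M), B' ⊆ greedySets r S C p n ∧
        (∑ j ∈ B, p j) ≤ (∑ j ∈ B', p j) ∧
        ∀ l : Fin L, n ≤ (l : ℕ) → (B' ∩ S l).card ≤ (B ∩ S l).card := by
  intro n
  induction n with
  | zero =>
    intro B _
    refine ⟨B ∩ Finset.univ.filter (fun j => 0 < p j), ?_, ?_, ?_⟩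
    · rw [greedySets]; exact Finset.inter_subset_right
    · have hsplit := Finset.sum_inter_add_sum_sdiff B
        (Finset.univ.filter (fun j => 0 < p j)) p
      have hnonpos : ∑ j ∈ B \ Finset.univ.filter (fun j => 0 < p j), p j ≤ 0 := by
        apply Finset.sum_nonpos
        intro j hj
        simp only [Finset.mem_sdiff, Finset.mem_filter, Finset.mem_univ, true_and] at hj
        exact le_of_not_gt hj.2
      linarith
    · intro l _
      exact Finset.card_le_card (Finset.inter_subset_inter Finset.inter_subset_left subset_rfl)
  | succ n ih =>
    intro B hB
    by_cases hn : n < L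
    · set ln : Fin L := ⟨n, hn⟩ with hln
      obtain ⟨Bt, hsub, hsum, hcards⟩ := ih B (fun k hk => hB k (Nat.lt_succ_of_lt hk))
      set A := greedySets r S C p n with hA
      set V := A ∩ S ln with hV
      set W := Bt ∩ S ln with hW
      have hWV : W ⊆ V := Finset.inter_subset_inter hsub subset_rfl
      have hWC : W.card ≤ C ln := le_trans (hcards ln (le_refl n)) (hB ln (Nat.lt_succ_self n))
      have hWT : W.card ≤ (TT r (C ln) V).card :=
        le_trans (le_min hWC (Finset.card_le_card hWV)) (min_le_card_TT r (C ln) V)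
      obtain ⟨h, hinj, hmem, hle⟩ := exists_selection r (C ln) hWV hWT
      have himgS : ∀ a ∈ W.image h, a ∈ S ln := by
        intro a ha
        obtain ⟨w, hw, rfl⟩ := Finset.mem_image.1 ha
        exact Finset.inter_subset_right (TT_subset r (C ln) V (hmem w hw))
      refine ⟨(Bt \ S ln) ∪ W.image h, ?_, ?_, ?_⟩
      · have : greedySets r S C p (n+1) = greedyStep r (C ln) (S ln) A := by
          rw [greedySets, dif_pos hn]
        rw [this, greedyStep_eq]
        apply Finset.union_subset_union
        · exact Finset.sdiff_subset_sdiff hsub subset_rfl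
        · intro a ha
          obtain ⟨w, hw, rfl⟩ := Finset.mem_image.1 ha
          exact hmem w hw
      · -- sums
        have hdisj : Disjoint (Bt \ S ln) (W.image h) := by
          rw [Finset.disjoint_left]
          intro a ha ha'
          exact (Finset.mem_sdiff.1 ha).2 (himgS a ha')
        rw [Finset.sum_union hdisj]
        have himg : ∑ j ∈ W.image h, p j = ∑ w ∈ W, p (h w) :=
          Finset.sum_image (fun x hx y hy hxy => hinj hx hy hxy)
        have hWle : ∑ w ∈ W, p w ≤ ∑ w ∈ W, p (h w) := by
          apply Finset.sum_le_sum
          intro w hw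
          rcases hle w hw with heq | hrel
          · rw [heq]
          · by_contra hlt
            push_neg at hlt
            exact (asymm hrel : ¬ r w (h w)) (hrefine w (h w) hlt)
        have hsplit := Finset.sum_inter_add_sum_sdiff Bt (S ln) p
        rw [himg]
        calc ∑ j ∈ B, p j ≤ ∑ j ∈ Bt, p j := hsum
          _ = ∑ j ∈ W, p j + ∑ j ∈ Bt \ S ln, p j := by rw [← hW] at hsplit; linarith
          _ ≤ ∑ j ∈ Bt \ S ln, p j + ∑ w ∈ W, p (h w) := by linarith
      · -- cards
        intro l hl
        have hl' : n ≤ (l : ℕ) := Nat.le_of_succ_le hl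
        by_cases hcase : S ln ⊆ S l
        · have hsub1 : ((Bt \ S ln) ∪ W.image h) ∩ S l ⊆ ((Bt ∩ S l) \ S ln) ∪ W.image h := by
            intro a ha
            obtain ⟨ha1, ha2⟩ := Finset.mem_inter.1 ha
            rcases Finset.mem_union.1 ha1 with h1 | h1
            · exact Finset.mem_union_left _ (Finset.mem_sdiff.2
                ⟨Finset.mem_inter.2 ⟨(Finset.mem_sdiff.1 h1).1, ha2⟩, (Finset.mem_sdiff.1 h1).2⟩)
            · exact Finset.mem_union_right _ h1
          calc (((Bt \ S ln) ∪ W.image h) ∩ S l).card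
              ≤ (((Bt ∩ S l) \ S ln) ∪ W.image h).card := Finset.card_le_card hsub1
            _ ≤ ((Bt ∩ S l) \ S ln).card + (W.image h).card := Finset.card_union_le _ _
            _ ≤ ((Bt ∩ S l) \ S ln).card + W.card := by
                exact Nat.add_le_add_left (Finset.card_image_le) _
            _ = ((Bt ∩ S l) \ S ln).card + ((Bt ∩ S l) ∩ S ln).card := by
                congr 1
                rw [hW]
                congr 1
                ext a
                simp only [Finset.mem_inter]
                exact ⟨fun ⟨h1, h2⟩ => ⟨⟨h1, hcase h2⟩, h2⟩, fun ⟨⟨h1, _⟩, h2⟩ => ⟨h1, h2⟩⟩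
            _ = (Bt ∩ S l).card := Finset.card_sdiff_add_card_inter _ _
            _ ≤ (B ∩ S l).card := hcards l hl'
        · -- disjoint case
          have hdisjS : ∀ a, a ∈ S ln → a ∉ S l := by
            intro a haln hal
            rcases hlaminar ln l ⟨a, Finset.mem_inter.2 ⟨haln, hal⟩⟩ with hc | hc
            · exact hcase hc
            · have hss : S l ⊂ S ln := lt_of_le_of_ne hc (fun he => hcase (le_of_eq he.symm))
              have := horder l ln hss
              have : (l : ℕ) < n := this
              omega
          have hsub1 : ((Bt \ S ln) ∪ W.image h) ∩ S l ⊆ Bt ∩ S l := by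
            intro a ha
            obtain ⟨ha1, ha2⟩ := Finset.mem_inter.1 ha
            rcases Finset.mem_union.1 ha1 with h1 | h1
            · exact Finset.mem_inter.2 ⟨(Finset.mem_sdiff.1 h1).1, ha2⟩
            · exact absurd ha2 (hdisjS a (himgS a h1))
          exact le_trans (Finset.card_le_card hsub1) (hcards l hl')
    · -- n ≥ L : step does nothing
      have heq : greedySets r S C p (n+1) = greedySets r S C p n := by
        rw [greedySets, dif_neg hn]
      obtain ⟨B', h1, h2, h3⟩ := ih B (fun k _ => hB k (Nat.lt_succ_of_lt (lt_of_lt_of_le k.2 (le_of_not_gt hn))))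
      exact ⟨B', heq ▸ h1, h2, fun l hl => h3 l (Nat.le_of_succ_le hl)⟩

end Greedy


/-- **Proposition 1.** For a hierarchical (laminar) family of local constraints, listed in a
linear order extending strict inclusion, with capacities `C l ≥ 1`, the greedy output `x*` is
feasible for all local constraints and maximizes `∑ j, p̃ j * x j` over all binary assignments
satisfying the local constraints. -/
theorem greedy_feasible_and_optimal
    {M L : ℕ} (hM : 0 < M) (hL : 0 < L)
    (S : Fin L → Finset (Fin M)) (C : Fin L → ℕ) (hC : ∀ l, 1 ≤ C l)
    (hlaminar : ∀ l l' : Fin L, (S l ∩ S l').Nonempty → S l ⊆ S l' ∨ S l' ⊆ S l)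
    (horder : ∀ a b : Fin L, S a ⊂ S b → a < b)
    (p : Fin M → ℝ)
    (r : Fin M → Fin M → Prop) (hr : IsStrictTotalOrder (Fin M) r)
    (hrefine : ∀ j j' : Fin M, p j > p j' → r j j') :
    (∀ l : Fin L, ∑ j ∈ S l, greedyOutput r S C p j ≤ (C l : ℝ)) ∧
    (∀ x : Fin M → ℝ, (∀ j, x j = 0 ∨ x j = 1) →
      (∀ l : Fin L, ∑ j ∈ S l, x j ≤ (C l : ℝ)) →
      ∑ j, p j * x j ≤ ∑ j, p j * greedyOutput r S C p j) := by
  haveI := hr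
  set AL := greedySets r S C p L with hAL
  constructor
  · -- feasibility
    intro l
    have hsum : ∑ j ∈ S l, greedyOutput r S C p j = ((S l ∩ AL).card : ℝ) := by
      unfold greedyOutput
      rw [Finset.sum_boole]
      congr 1
    rw [hsum]
    have hcard : (S l ∩ AL).card ≤ C l := by
      have hsub : AL ⊆ greedySets r S C p ((l : ℕ) + 1) :=
        greedySets_subset r S C p (Nat.succ_le_of_lt l.2)
      have heq : greedySets r S C p ((l : ℕ) + 1) ∩ S l
          = TT r (C l) (greedySets r S C p (l : ℕ) ∩ S l) := by
        rw [greedySets, dif_pos l.2]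
        simp only [Fin.eta]
        exact greedyStep_inter r _ _ _
      calc (S l ∩ AL).card = (AL ∩ S l).card := by rw [Finset.inter_comm]
        _ ≤ (greedySets r S C p ((l : ℕ) + 1) ∩ S l).card :=
            Finset.card_le_card (Finset.inter_subset_inter hsub subset_rfl)
        _ ≤ C l := by rw [heq]; exact card_TT_le r _ _
    exact_mod_cast hcard
  · -- optimality
    intro x hx01 hxfeas
    set B := Finset.univ.filter (fun j => x j = 1) with hB
    have hxB : ∀ j, p j * x j = if j ∈ B then p j else 0 := by
      intro j
      rcases hx01 j with h0 | h1
      · rw [h0, if_neg, mul_zero]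
        simp only [hB, Finset.mem_filter, Finset.mem_univ, true_and]
        rw [h0]; norm_num
      · rw [h1, if_pos, mul_one]
        simp only [hB, Finset.mem_filter, Finset.mem_univ, true_and]
        exact h1
    have hsumB : ∑ j, p j * x j = ∑ j ∈ B, p j := by
      rw [Finset.sum_congr rfl (fun j _ => hxB j), Finset.sum_ite_mem, Finset.univ_inter]
    have hfeas : ∀ k : Fin L, (k : ℕ) < L → (B ∩ S k).card ≤ C k := by
      intro k _
      have : ∑ j ∈ S k, x j = ((B ∩ S k).card : ℝ) := by
        have : ∀ j ∈ S k, x j = if j ∈ B then (1 : ℝ) else 0 := by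
          intro j _
          rcases hx01 j with h0 | h1
          · rw [h0, if_neg]
            simp only [hB, Finset.mem_filter, Finset.mem_univ, true_and]
            rw [h0]; norm_num
          · rw [h1, if_pos]
            simp only [hB, Finset.mem_filter, Finset.mem_univ, true_and]
            exact h1
        rw [Finset.sum_congr rfl this, Finset.sum_boole, Finset.filter_mem_eq_inter,
          Finset.inter_comm]
      have hle := hxfeas k
      rw [this] at hle
      exact_mod_cast hle
    obtain ⟨B', hB'sub, hB'sum, _⟩ :=
      greedy_invariant r S C p hlaminar horder hrefine L B hfeas
    have hfinal : ∑ j ∈ B', p j ≤ ∑ j ∈ AL, p j := by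
      apply Finset.sum_le_sum_of_subset_of_nonneg hB'sub
      intro j hj _
      exact le_of_lt (greedySets_pos r S C p hj)
    have hsumAL : ∑ j, p j * greedyOutput r S C p j = ∑ j ∈ AL, p j := by
      unfold greedyOutput
      rw [← hAL]
      have : ∀ j : Fin M, p j * (if j ∈ AL then (1:ℝ) else 0) = if j ∈ AL then p j else 0 := by
        intro j; split <;> simp
      rw [Finset.sum_congr rfl (fun j _ => this j), Finset.sum_ite_mem, Finset.univ_inter]
    rw [hsumB, hsumAL]
    exact le_trans hB'sum hfinal
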